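/- Every finite tree T with q ≥ 1 edges admits an odd-edge edge-magic total coloring: there exist a constant k and an assignment f of natural numbers to the vertices and edges of T such that the set of edge colors {f(e) : e ∈ E(T)} equals the odd set {1,3,…,2q−1} and f(u) + f(uv) + f(v) = k for every edge uv of T. -/

import Mathlib

open SimpleGraph

/-- Signed alternating sum of edge labels along a walk. -/
noncomputable def wsum {V : Type*} {T : SimpleGraph V} (fE : Sym2 V → ℕ) :
    ∀ {v r : V}, T.Walk v r → ℤ
  | _, _, SimpleGraph.Walk.nil => 0
  | _, _, @SimpleGraph.Walk.cons _ _ u w _ _ p => -(fE s(u, w) : ℤ) - wsum fE p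

lemma wsum_natAbs_le {V : Type*} {T : SimpleGraph V} (fE : Sym2 V → ℕ) (B : ℕ)
    (hB : ∀ s, fE s ≤ B) : ∀ {v r : V} (p : T.Walk v r), (wsum fE p).natAbs ≤ B * p.length
  | _, _, SimpleGraph.Walk.nil => by simp [wsum]
  | _, _, @SimpleGraph.Walk.cons _ _ u w _ h p => by
    have ih := wsum_natAbs_le fE B hB p
    have h1 : (wsum fE (SimpleGraph.Walk.cons h p)).natAbs
        ≤ fE s(u, w) + (wsum fE p).natAbs := by
      simp only [wsum]
      calc (-(fE s(u, w) : ℤ) - wsum fE p).natAbs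
          ≤ (-(fE s(u, w) : ℤ)).natAbs + (wsum fE p).natAbs := Int.natAbs_sub_le _ _
        _ = fE s(u, w) + (wsum fE p).natAbs := by simp
    have := hB s(u, w)
    simp only [SimpleGraph.Walk.length_cons, Nat.mul_add, Nat.mul_one]
    omega

theorem tree_admits_odd_edge_edge_magic_total_coloring
    {V : Type*} [Fintype V] [DecidableEq V]
    (T : SimpleGraph V) [DecidableRel T.Adj]
    (hT : T.IsTree)
    (q : ℕ) (hq : q = T.edgeFinset.card) (hq1 : 1 ≤ q) :
    ∃ (fV : V → ℕ) (fE : Sym2 V → ℕ) (k : ℕ),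
      fE '' T.edgeSet = {n : ℕ | Odd n ∧ n < 2 * q} ∧
      ∀ u v, T.Adj u v → fV u + fE s(u, v) + fV v = k := by
  classical
  -- the edge labeling
  obtain ⟨e⟩ : Nonempty (T.edgeFinset ≃ Fin q) :=
    ⟨Fintype.equivFinOfCardEq (by rw [Fintype.card_coe]; convert hq.symm)⟩
  set fE : Sym2 V → ℕ := fun s =>
    if h : s ∈ T.edgeFinset then 2 * (e ⟨s, h⟩ : ℕ) + 1 else 0 with hfE
  have hfE_le : ∀ s, fE s ≤ 2 * q := by
    intro s
    simp only [hfE]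
    split
    · rename_i h
      have := (e ⟨s, h⟩).2
      omega
    · omega
  -- image of the edge set
  have himg : fE '' T.edgeSet = {n : ℕ | Odd n ∧ n < 2 * q} := by
    ext n
    constructor
    · rintro ⟨s, hs, rfl⟩
      have hs' : s ∈ T.edgeFinset := by rwa [mem_edgeFinset]
      have := (e ⟨s, hs'⟩).2
      simp only [hfE, dif_pos hs', Set.mem_setOf_eq]
      exact ⟨⟨(e ⟨s, hs'⟩ : ℕ), by ring⟩, by omega⟩
    · rintro ⟨⟨m, hm⟩, hlt⟩
      have hmq : m < q := by omega
      refine ⟨(e.symm ⟨m, hmq⟩ : Sym2 V), ?_, ?_⟩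
      · have := (e.symm ⟨m, hmq⟩).2
        rwa [mem_edgeFinset] at this
      · have hmem := (e.symm ⟨m, hmq⟩).2
        simp only [hfE, dif_pos hmem]
        have : e ⟨(e.symm ⟨m, hmq⟩ : Sym2 V), hmem⟩ = ⟨m, hmq⟩ := by
          rw [show (⟨(e.symm ⟨m, hmq⟩ : Sym2 V), hmem⟩ : T.edgeFinset) = e.symm ⟨m, hmq⟩
            from Subtype.ext rfl]
          exact e.apply_symm_apply _
        rw [this]
        show 2 * m + 1 = n
        omega
  -- vertex labeling via alternating sums along unique paths to a root
  have hne : Nonempty V := hT.isConnected.nonempty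
  obtain ⟨r⟩ := hne
  have hup := hT.existsUnique_path
  set P : ∀ v : V, T.Walk v r := fun v => (hup v r).choose with hP
  have hPpath : ∀ v, (P v).IsPath := fun v => (hup v r).choose_spec.1
  have hPuniq : ∀ v (p : T.Walk v r), p.IsPath → p = P v :=
    fun v p hp => (hup v r).choose_spec.2 p hp
  set gV : V → ℤ := fun v => wsum fE (P v) with hgV
  -- the key magic relation over ℤ
  have hkey : ∀ u v, T.Adj u v → gV u + gV v = -(fE s(u, v) : ℤ) := by
    intro u v hadj
    by_cases hv : v ∈ (P u).support
    · -- drop the path P u until v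
      have hdrop := (hPpath u).dropUntil hv
      have hu_not : u ∉ ((P u).dropUntil v hv).support := by
        intro hu
        have hspec := SimpleGraph.Walk.take_spec (P u) hv
        have hnodup : ((P u).support).Nodup := (hPpath u).support_nodup
        rw [← hspec, SimpleGraph.Walk.support_append] at hnodup
        have hu_take : u ∈ ((P u).takeUntil v hv).support :=
          SimpleGraph.Walk.start_mem_support _
        have hu_tail : u ∈ (((P u).dropUntil v hv).support).tail := by
          have hhead : ((P u).dropUntil v hv).support =
              v :: (((P u).dropUntil v hv).support).tail := by
            exact SimpleGraph.Walk.support_eq_cons _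
          rw [hhead] at hu
          rcases List.mem_cons.mp hu with h | h
          · exact absurd h.symm hadj.ne'
          · exact h
        exact (List.disjoint_of_nodup_append hnodup) hu_take hu_tail
      have hcons : (SimpleGraph.Walk.cons hadj ((P u).dropUntil v hv)).IsPath :=
        hdrop.cons hu_not
      have := hPuniq u _ hcons
      have hdropP : (P u).dropUntil v hv = P v := hPuniq v _ hdrop
      have h3 : gV u = -(fE s(u, v) : ℤ) - gV v := by
        show wsum fE (P u) = -(fE s(u, v) : ℤ) - wsum fE (P v)
        rw [← this, ← hdropP]
        simp [wsum]
      omega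
    · -- extend the path P u by the edge v-u
      have hcons : (SimpleGraph.Walk.cons hadj.symm (P u)).IsPath :=
        (hPpath u).cons hv
      have := hPuniq v _ hcons
      have hgv : gV v = -(fE s(v, u) : ℤ) - gV u := by
        show wsum fE (P v) = -(fE s(v, u) : ℤ) - wsum fE (P u)
        rw [← this]
        simp [wsum]
      rw [Sym2.eq_swap] at hgv
      omega
  -- shift to get natural number labels
  set M : ℕ := 2 * q * Fintype.card V with hM
  have hbound : ∀ v, (gV v).natAbs ≤ M := by
    intro v
    calc (gV v).natAbs ≤ 2 * q * (P v).length := wsum_natAbs_le fE (2 * q) hfE_le (P v)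
      _ ≤ 2 * q * Fintype.card V :=
        Nat.mul_le_mul_left _ (le_of_lt (hPpath v).length_lt)
  refine ⟨fun v => (gV v + M).toNat, fE, 2 * M, himg, ?_⟩
  intro u v hadj
  have hu := hbound u
  have hvb := hbound v
  have hk := hkey u v hadj
  have hfle := hfE_le s(u, v)
  have h1 : ((gV u + M).toNat : ℤ) = gV u + M := Int.toNat_of_nonneg (by omega)
  have h2 : ((gV v + M).toNat : ℤ) = gV v + M := Int.toNat_of_nonneg (by omega)
  have : (((gV u + M).toNat + fE s(u, v) + (gV v + M).toNat : ℕ) : ℤ) = ((2 * M : ℕ) : ℤ) := by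
    push_cast
    omega
  exact_mod_cast this
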